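/- Let g ≥ 1 be an integer, let A be an allocation of the items M = {1,…,m} among n agents, and for a profile u of monotone utility functions define scr^g_A(u) := −min{ t ∈ {1,…,g} : A is EF(2t) with respect to u^{−(g−t)} }, with scr^g_A(u) := −g if this set is empty. Then for every pair of (agent × item)-level adjacent profiles u, ũ of monotone utility functions, |scr^g_A(u) − scr^g_A(ũ)| ≤ 1. -/
import Mathlib


def IsPartition {n m : ℕ} (A : Fin n → Finset (Fin m)) : Prop :=
  (∀ i j : Fin n, i ≠ j → Disjoint (A i) (A j)) ∧
    Finset.univ.biUnion A = (Finset.univ : Finset (Fin m))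

def EF {n m : ℕ} (c : ℕ) (u : Fin n → Finset (Fin m) → ℝ)
    (A : Fin n → Finset (Fin m)) : Prop :=
  ∀ i i' : Fin n, ∃ S ⊆ A i', S.card ≤ c ∧ u i (A i) ≥ u i (A i' \ S)

noncomputable def kRemoved {m : ℕ} (u : Finset (Fin m) → ℝ) (k : ℕ)
    (S : Finset (Fin m)) : ℝ :=
  ((Finset.univ : Finset (Fin m)).powerset.filter fun T => T.card ≤ k).inf'
    ⟨∅, by simp⟩ fun T => u (S \ T)

def MonotoneProfile {n m : ℕ} (u : Fin n → Finset (Fin m) → ℝ) : Prop :=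
  ∀ i : Fin n, (∀ S : Finset (Fin m), 0 ≤ u i S) ∧
    ∀ S T : Finset (Fin m), S ⊆ T → u i S ≤ u i T

def ItemAdjFn {n m : ℕ} (u u' : Fin n → Finset (Fin m) → ℝ) : Prop :=
  ∃ (iStar : Fin n) (jStar : Fin m),
    (∀ i : Fin n, i ≠ iStar → u i = u' i) ∧
    ∀ S : Finset (Fin m), jStar ∉ S → u iStar S = u' iStar S

/-- The scoring function `scr^g_A(u) = −min{t ∈ [g] : A is EF(2t) w.r.t. u^{−(g−t)}}`,
with value `−g` if the set is empty. -/
noncomputable def scr {n m : ℕ} (g : ℕ) (A : Fin n → Finset (Fin m))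
    (u : Fin n → Finset (Fin m) → ℝ) : ℤ := by
  classical
  exact if ({t : ℕ | 1 ≤ t ∧ t ≤ g ∧
        EF (2 * t) (fun i => kRemoved (u i) (g - t)) A}).Nonempty
    then -((sInf {t : ℕ | 1 ≤ t ∧ t ≤ g ∧
        EF (2 * t) (fun i => kRemoved (u i) (g - t)) A} : ℕ) : ℤ)
    else -(g : ℤ)

namespace ScrSens

variable {m : ℕ}

lemma kRemoved_le (u : Finset (Fin m) → ℝ) (k : ℕ) (S T : Finset (Fin m))
    (hT : T.card ≤ k) : kRemoved u k S ≤ u (S \ T) := by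
  apply Finset.inf'_le
  simp [hT]

lemma le_kRemoved (u : Finset (Fin m) → ℝ) (k : ℕ) (S : Finset (Fin m)) (c : ℝ)
    (h : ∀ T : Finset (Fin m), T.card ≤ k → c ≤ u (S \ T)) :
    c ≤ kRemoved u k S := by
  apply Finset.le_inf'
  intro T hT
  simp only [Finset.mem_filter, Finset.mem_powerset] at hT
  exact h T hT.2

lemma kRemoved_exists (u : Finset (Fin m) → ℝ) (k : ℕ) (S : Finset (Fin m)) :
    ∃ T : Finset (Fin m), T.card ≤ k ∧ kRemoved u k S = u (S \ T) := by
  obtain ⟨T, hT, h⟩ := Finset.exists_mem_eq_inf'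
    (s := (Finset.univ : Finset (Fin m)).powerset.filter fun T => T.card ≤ k)
    ⟨∅, by simp⟩ (fun T => u (S \ T))
  simp only [Finset.mem_filter, Finset.mem_powerset] at hT
  exact ⟨T, hT.2, h⟩

/-- Lemma A(a): if `v` is monotone and agrees with `u` on sets avoiding `j`, then
`u^{−(k+1)} ≤ v^{−k}` pointwise. -/
lemma lemA_a (u v : Finset (Fin m) → ℝ) (j : Fin m)
    (hv : ∀ S T : Finset (Fin m), S ⊆ T → v S ≤ v T)
    (hag : ∀ S : Finset (Fin m), j ∉ S → u S = v S) (k : ℕ) (S : Finset (Fin m)) :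
    kRemoved u (k + 1) S ≤ kRemoved v k S := by
  apply le_kRemoved
  intro T hT
  calc kRemoved u (k + 1) S ≤ u (S \ insert j T) := by
        apply kRemoved_le
        calc (insert j T).card ≤ T.card + 1 := Finset.card_insert_le _ _
          _ ≤ k + 1 := by omega
    _ = v (S \ insert j T) := hag _ (by simp)
    _ ≤ v (S \ T) := by
        apply hv
        apply Finset.sdiff_subset_sdiff (Finset.Subset.refl _)
        exact Finset.subset_insert _ _

/-- Lemma A(b): if `u` is monotone and agrees with `v` on sets avoiding `j`, then
there exists one more item `j'` such that `v^{−k}(S \ {j, j'}) ≤ u^{−(k+1)}(S)`. -/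
lemma lemA_b (u v : Finset (Fin m) → ℝ) (j : Fin m)
    (hu : ∀ S T : Finset (Fin m), S ⊆ T → u S ≤ u T)
    (hag : ∀ S : Finset (Fin m), j ∉ S → u S = v S) (k : ℕ) (S : Finset (Fin m)) :
    ∃ j' : Fin m, kRemoved v k ((S \ {j}) \ {j'}) ≤ kRemoved u (k + 1) S := by
  obtain ⟨T₀, hT₀, heq⟩ := kRemoved_exists u (k + 1) S
  rcases T₀.eq_empty_or_nonempty with hE | ⟨j', hj'⟩
  · refine ⟨j, ?_⟩
    calc kRemoved v k ((S \ {j}) \ {j}) ≤ v (((S \ {j}) \ {j}) \ ∅) :=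
          kRemoved_le _ _ _ _ (by simp)
      _ = u (((S \ {j}) \ {j}) \ ∅) := (hag _ (by simp)).symm
      _ ≤ u (S \ T₀) := by
          apply hu; subst hE; intro x hx; simp at hx ⊢; tauto
      _ = kRemoved u (k + 1) S := heq.symm
  · refine ⟨j', ?_⟩
    have hcard : (T₀.erase j').card ≤ k := by
      have h1 : (T₀.erase j').card = T₀.card - 1 := Finset.card_erase_of_mem hj'
      have h2 : 1 ≤ T₀.card := Finset.card_pos.mpr ⟨j', hj'⟩
      omega
    calc kRemoved v k ((S \ {j}) \ {j'})
        ≤ v (((S \ {j}) \ {j'}) \ T₀.erase j') := kRemoved_le _ _ _ _ hcard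
      _ = u (((S \ {j}) \ {j'}) \ T₀.erase j') := (hag _ (by simp)).symm
      _ ≤ u (S \ T₀) := by
          apply hu
          intro x hx
          simp only [Finset.mem_sdiff, Finset.mem_singleton, Finset.mem_erase] at hx ⊢
          tauto
      _ = kRemoved u (k + 1) S := heq.symm

/-- The key step: EF(2t) w.r.t. `u^{−(g−t)}` implies EF(2(t+1)) w.r.t. `v^{−(g−t−1)}`
for adjacent profiles. -/
lemma ef_step {n g t : ℕ} (A : Fin n → Finset (Fin m))
    (u v : Fin n → Finset (Fin m) → ℝ)
    (hu : MonotoneProfile u) (hv : MonotoneProfile v)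
    (iS : Fin n) (jS : Fin m)
    (h1 : ∀ i : Fin n, i ≠ iS → u i = v i)
    (h2 : ∀ S : Finset (Fin m), jS ∉ S → u iS S = v iS S)
    (ht : t + 1 ≤ g)
    (hEF : EF (2 * t) (fun i => kRemoved (u i) (g - t)) A) :
    EF (2 * (t + 1)) (fun i => kRemoved (v i) (g - (t + 1))) A := by
  intro i i'
  obtain ⟨S, hS, hcard, hge⟩ := hEF i i'
  have hag : ∀ X : Finset (Fin m), jS ∉ X → u i X = v i X := by
    by_cases hi : i = iS
    · subst hi; exact h2
    · intro X _; rw [h1 i hi]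
  have hk : g - t = (g - (t + 1)) + 1 := by omega
  obtain ⟨j', hj'⟩ := lemA_b (u i) (v i) jS (hu i).2 hag (g - (t + 1)) (A i' \ S)
  have ha := lemA_a (u i) (v i) jS (hv i).2 hag (g - (t + 1)) (A i)
  rw [← hk] at hj' ha
  refine ⟨(S ∪ {jS} ∪ {j'}) ∩ A i', Finset.inter_subset_right, ?_, ?_⟩
  · calc ((S ∪ {jS} ∪ {j'}) ∩ A i').card ≤ (S ∪ {jS} ∪ {j'}).card :=
          Finset.card_le_card Finset.inter_subset_left
      _ ≤ (S ∪ {jS}).card + ({j'} : Finset (Fin m)).card := Finset.card_union_le _ _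
      _ ≤ (S.card + ({jS} : Finset (Fin m)).card) + 1 := by
          have := Finset.card_union_le S ({jS} : Finset (Fin m))
          simp at this ⊢; omega
      _ ≤ 2 * (t + 1) := by simp; omega
  · show kRemoved (v i) (g - (t + 1)) (A i) ≥
      kRemoved (v i) (g - (t + 1)) (A i' \ ((S ∪ {jS} ∪ {j'}) ∩ A i'))
    have hset : A i' \ ((S ∪ {jS} ∪ {j'}) ∩ A i') = ((A i' \ S) \ {jS}) \ {j'} := by
      ext x; simp; tauto
    rw [hset]
    calc kRemoved (v i) (g - (t + 1)) (((A i' \ S) \ {jS}) \ {j'})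
        ≤ kRemoved (u i) (g - t) (A i' \ S) := hj'
      _ ≤ kRemoved (u i) (g - t) (A i) := hge
      _ ≤ kRemoved (v i) (g - (t + 1)) (A i) := ha

end ScrSens

theorem scr_sensitivity (n m : ℕ) (g : ℕ) (hg : 1 ≤ g)
    (A : Fin n → Finset (Fin m)) (hA : IsPartition A)
    (u utilde : Fin n → Finset (Fin m) → ℝ)
    (hu : MonotoneProfile u) (hut : MonotoneProfile utilde)
    (hadj : ItemAdjFn u utilde) :
    |scr g A u - scr g A utilde| ≤ 1 := by
  classical
  obtain ⟨iS, jS, h1, h2⟩ := hadj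
  set P : (Fin n → Finset (Fin m) → ℝ) → Set ℕ := fun w =>
    {t : ℕ | 1 ≤ t ∧ t ≤ g ∧ EF (2 * t) (fun i => kRemoved (w i) (g - t)) A} with hP
  -- one-sided step lemmas
  have step : ∀ (w w' : Fin n → Finset (Fin m) → ℝ), MonotoneProfile w →
      MonotoneProfile w' →
      (∀ i : Fin n, i ≠ iS → w i = w' i) →
      (∀ S : Finset (Fin m), jS ∉ S → w iS S = w' iS S) →
      ∀ t ∈ P w, t + 1 ≤ g → t + 1 ∈ P w' := by
    intro w w' hw hw' hh1 hh2 t ht htg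
    exact ⟨by omega, htg, ScrSens.ef_step A w w' hw hw' iS jS hh1 hh2 htg ht.2.2⟩
  have h1' : ∀ i : Fin n, i ≠ iS → utilde i = u i := fun i hi => (h1 i hi).symm
  have h2' : ∀ S : Finset (Fin m), jS ∉ S → utilde iS S = u iS S := fun S hS => (h2 S hS).symm
  -- general one-sided bound on scr values
  have oneside : ∀ (w w' : Fin n → Finset (Fin m) → ℝ), MonotoneProfile w →
      MonotoneProfile w' →
      (∀ i : Fin n, i ≠ iS → w i = w' i) →
      (∀ S : Finset (Fin m), jS ∉ S → w iS S = w' iS S) →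
      scr g A w - 1 ≤ scr g A w' := by
    intro w w' hw hw' hh1 hh2
    have hscr : ∀ v : Fin n → Finset (Fin m) → ℝ, scr g A v =
        if (P v).Nonempty then -((sInf (P v) : ℕ) : ℤ) else -(g : ℤ) := by
      intro v; rfl
    have hge : ∀ v : Fin n → Finset (Fin m) → ℝ, -(g : ℤ) ≤ scr g A v := by
      intro v
      rw [hscr v]
      split_ifs with h
      · have := (Nat.sInf_mem h).2.1
        omega
      · omega
    rw [hscr w, hscr w']
    split_ifs with hw1 hw2 hw2
    · -- both nonempty
      have hmem := Nat.sInf_mem hw1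
      set a := sInf (P w) with ha
      by_cases hlt : a + 1 ≤ g
      · have : a + 1 ∈ P w' := step w w' hw hw' hh1 hh2 a hmem hlt
        have := Nat.sInf_le this
        omega
      · have h1a : a ≤ g := hmem.2.1
        have h2a : sInf (P w') ≤ g := (Nat.sInf_mem hw2).2.1
        omega
    · -- P w nonempty, P w' empty: impossible unless sInf (P w) = g
      have hmem := Nat.sInf_mem hw1
      have : sInf (P w) ≤ g := hmem.2.1
      by_cases hlt : sInf (P w) + 1 ≤ g
      · exact absurd ⟨_, step w w' hw hw' hh1 hh2 _ hmem hlt⟩ hw2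
      · omega
    · have : sInf (P w') ≤ g := (Nat.sInf_mem hw2).2.1
      omega
    · omega
  have hAB := oneside u utilde hu hut h1 h2
  have hBA := oneside utilde u hut hu h1' h2'
  rw [abs_le]
  omega
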